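/- Let V be a real quadratic space of signature (1, n-1), P, s ∈ V with P² = s² = 1 and (P·s)² > 1. Then for every Q ∈ V with sgn(Q·P) ≠ sgn(Q·s) (both nonzero, opposite signs), one has Q² + (2(P·s)/(1-(P·s)²))(Q·P)(Q·s) ≤ ((Q·P)² + (Q·s)²)/(1-(P·s)²) < 0. -/

import Mathlib

private theorem bilin_coord_aux {n : ℕ} [NeZero n] {V : Type*} [AddCommGroup V] [Module ℝ V]
    (B : V →ₗ[ℝ] V →ₗ[ℝ] ℝ) (b : Module.Basis (Fin n) ℝ V)
    (hsig : ∀ i j, B (b i) (b j) =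
      if i = j then (if i = 0 then (1 : ℝ) else -1) else 0)
    (x y : V) :
    B x y = (b.repr x 0) * (b.repr y 0)
      - ∑ i ∈ Finset.univ.erase (0 : Fin n), (b.repr x i) * (b.repr y i) := by
  have h : B x y = ∑ i, (if i = 0 then (1:ℝ) else -1) * (b.repr x i) * (b.repr y i) := by
    conv_lhs => rw [← b.sum_repr x, ← b.sum_repr y]
    simp [-Module.Basis.sum_repr, map_sum, hsig, Finset.mul_sum, mul_ite, Finset.sum_ite_eq']
    exact Finset.sum_congr rfl fun i _ => by split <;> ring
  rw [h, ← Finset.sum_erase_add _ _ (Finset.mem_univ (0 : Fin n))]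
  have h2 : ∑ i ∈ Finset.univ.erase (0:Fin n),
      (if i = 0 then (1:ℝ) else -1) * (b.repr x i) * (b.repr y i)
      = -∑ i ∈ Finset.univ.erase (0:Fin n), (b.repr x i) * (b.repr y i) := by
    rw [← Finset.sum_neg_distrib]
    exact Finset.sum_congr rfl fun i hi => by
      rw [if_neg (Finset.mem_erase.mp hi).1]; ring
  rw [h2, if_pos rfl]
  ring

private theorem neg_of_orth_aux {n : ℕ} [NeZero n] {V : Type*} [AddCommGroup V] [Module ℝ V]
    (B : V →ₗ[ℝ] V →ₗ[ℝ] ℝ) (b : Module.Basis (Fin n) ℝ V)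
    (hsig : ∀ i j, B (b i) (b j) =
      if i = j then (if i = 0 then (1 : ℝ) else -1) else 0)
    (P R : V) (hP : B P P = 1) (hRP : B R P = 0) : B R R ≤ 0 := by
  set T := Finset.univ.erase (0 : Fin n)
  set u : Fin n → ℝ := fun i => b.repr P i with hu
  set v : Fin n → ℝ := fun i => b.repr R i with hv
  rw [bilin_coord_aux B b hsig] at hP hRP ⊢
  set A := ∑ i ∈ T, u i * u i with hA
  set D := ∑ i ∈ T, v i * v i with hD
  set C := ∑ i ∈ T, v i * u i with hC
  have hAnn : 0 ≤ A := Finset.sum_nonneg fun i _ => mul_self_nonneg _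
  have hDnn : 0 ≤ D := Finset.sum_nonneg fun i _ => mul_self_nonneg _
  have hCS : C ^ 2 ≤ D * A := by
    have := Finset.sum_mul_sq_le_sq_mul_sq T v u
    simpa [hC, hA, hD, sq] using this
  have h1 : (b.repr R 0) * (b.repr P 0) = C := by linarith
  have h2 : ((b.repr R 0) * (b.repr R 0)) * ((b.repr P 0) * (b.repr P 0)) ≤ D * A := by
    calc ((b.repr R 0) * (b.repr R 0)) * ((b.repr P 0) * (b.repr P 0)) = C^2 := by
          rw [← h1]; ring
    _ ≤ D * A := hCS
  nlinarith [h2, hP, hAnn, hDnn, mul_self_nonneg (b.repr R 0)]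

/-- Signature `(1, n-1)` quadratic space, `P² = s² = 1`, `(P·s)² > 1`.  For every `Q`
whose pairings with `P` and `s` are nonzero and have opposite signs,
`Q² + (2(P·s)/(1-(P·s)²))(Q·P)(Q·s) ≤ ((Q·P)² + (Q·s)²)/(1-(P·s)²) < 0`. -/
theorem norm_bound_of_opposite_signs {n : ℕ} [NeZero n] {V : Type*}
    [AddCommGroup V] [Module ℝ V]
    (B : V →ₗ[ℝ] V →ₗ[ℝ] ℝ) (hsymm : ∀ x y, B x y = B y x)
    (b : Module.Basis (Fin n) ℝ V)
    (hsig : ∀ i j, B (b i) (b j) =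
      if i = j then (if i = 0 then (1 : ℝ) else -1) else 0)
    (P s : V) (hP : B P P = 1) (hs : B s s = 1) (hPs : 1 < (B P s) ^ 2) :
    ∀ Q : V, B Q P ≠ 0 → B Q s ≠ 0 → Real.sign (B Q P) ≠ Real.sign (B Q s) →
      (B Q Q + (2 * B P s / (1 - (B P s) ^ 2)) * (B Q P) * (B Q s) ≤
          ((B Q P) ^ 2 + (B Q s) ^ 2) / (1 - (B P s) ^ 2) ∧
        ((B Q P) ^ 2 + (B Q s) ^ 2) / (1 - (B P s) ^ 2) < 0) := by
  intro Q hp hq _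
  set a := B P s with ha
  set p := B Q P with hpd
  set q := B Q s with hqd
  have hd : 1 - a ^ 2 < 0 := by nlinarith [hPs]
  have hdne : 1 - a ^ 2 ≠ 0 := ne_of_lt hd
  set R := Q - ((p - a * q) / (1 - a ^ 2)) • P - ((q - a * p) / (1 - a ^ 2)) • s with hR
  have hRP : B R P = 0 := by
    simp only [hR, map_sub, map_smul, LinearMap.sub_apply, LinearMap.smul_apply,
      smul_eq_mul]
    rw [hP, hsymm s P, ← ha, ← hpd]
    field_simp
    ring
  have hRs : B R s = 0 := by
    simp only [hR, map_sub, map_smul, LinearMap.sub_apply, LinearMap.smul_apply,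
      smul_eq_mul]
    rw [hs, ← ha, ← hqd]
    field_simp
    ring
  have hRR : B R R ≤ 0 := neg_of_orth_aux B b hsig P R hP hRP
  have hexp : B R R = B Q Q - (p ^ 2 + q ^ 2 - 2 * a * p * q) / (1 - a ^ 2) := by
    conv_lhs => rw [hR]
    simp only [map_sub, map_smul, LinearMap.sub_apply, LinearMap.smul_apply, smul_eq_mul]
    rw [hP, hs, hsymm s P, hsymm P Q, hsymm s Q, ← ha, ← hpd, ← hqd]
    field_simp
    ring
  constructor
  · have h1 : B Q Q ≤ (p ^ 2 + q ^ 2 - 2 * a * p * q) / (1 - a ^ 2) := by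
      rw [hexp] at hRR; linarith
    have h2 : (p ^ 2 + q ^ 2) / (1 - a ^ 2)
        = (p ^ 2 + q ^ 2 - 2 * a * p * q) / (1 - a ^ 2) + (2 * a / (1 - a ^ 2)) * p * q := by
      field_simp
      ring
    rw [h2]
    linarith
  · apply div_neg_of_pos_of_neg _ hd
    have := pow_two_pos_of_ne_zero hp
    have := pow_two_pos_of_ne_zero hq
    linarith
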